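/- For every positive integer m and every n ≥ 0, the polynomial mt(mt−h)(mt−2h)⋯(mt−(n−1)h)/n! lies in the ℤ[h]-span B₀ of the polynomials b_k(t,h) = t(t−h)⋯(t−(k−1)h)/k!; moreover, in B₀[[z]] one has Σ_{n≥0} (mt(mt−h)⋯(mt−(n−1)h)/n!) z^n = Σ_{n≥0} b_n(t,h) v^n z^n, where v = ((1+hz)^m − 1)/(hz) ∈ ℤ[h,z]. -/

import Mathlib

open Polynomial

/-- h, viewed inside ℚ[h][t] = Polynomial (Polynomial ℚ). -/
noncomputable def hB : Polynomial (Polynomial ℚ) := Polynomial.C Polynomial.X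

/-- t, viewed inside ℚ[h][t]. -/
noncomputable def tB : Polynomial (Polynomial ℚ) := Polynomial.X

/-- b_n(t,h) = t(t−h)⋯(t−(n−1)h)/n!. -/
noncomputable def bpoly (n : ℕ) : Polynomial (Polynomial ℚ) :=
  Polynomial.C (Polynomial.C ((n.factorial : ℚ)⁻¹)) *
    ∏ i ∈ Finset.range n, (tB - (i : Polynomial (Polynomial ℚ)) * hB)

/-- mt(mt−h)⋯(mt−(n−1)h)/n!. -/
noncomputable def mbpoly (m n : ℕ) : Polynomial (Polynomial ℚ) :=
  Polynomial.C (Polynomial.C ((n.factorial : ℚ)⁻¹)) *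
    ∏ i ∈ Finset.range n,
      ((m : Polynomial (Polynomial ℚ)) * tB - (i : Polynomial (Polynomial ℚ)) * hB)

/-- the image of ℤ[h] inside ℚ[h][t]. -/
noncomputable def intH (g : Polynomial ℤ) : Polynomial (Polynomial ℚ) :=
  Polynomial.C (g.map (Int.castRingHom ℚ))

/-- the polynomial v = ((1+hz)^m − 1)/(hz) = Σ_{i=1}^m C(m,i) h^{i−1} z^{i−1},
as a power series in z over ℚ[h][t]. -/
noncomputable def vSeries (m : ℕ) : PowerSeries (Polynomial (Polynomial ℚ)) :=
  PowerSeries.mk fun k =>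
    if k + 1 ≤ m then (m.choose (k + 1) : Polynomial (Polynomial ℚ)) * hB ^ k else 0

/-! ### Auxiliary material -/

namespace Stmt12Aux

abbrev A := Polynomial (Polynomial ℚ)

/-- `P(w) = (1+w)^m - 1` over `ℤ`. -/
noncomputable def Pz (m : ℕ) : Polynomial ℤ := (X + 1) ^ m - 1

/-- `T m n k` is the coefficient of `w^k` in `((1+w)^m - 1)^n`. -/
noncomputable def T (m n k : ℕ) : ℤ := ((Pz m) ^ n).coeff k

lemma T_eq_zero {m n k : ℕ} (h : k < n) : T m n k = 0 := by
  have hX : (X : Polynomial ℤ) ∣ Pz m :=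
    Polynomial.X_dvd_iff.mpr (by simp [Pz, coeff_X_add_one_pow])
  exact Polynomial.X_pow_dvd_iff.mp (pow_dvd_pow_of_dvd hX n) k h

/-- The natural-number identity `C(ms,k) = Σ_n T m n k * C(s,n)`. -/
lemma natId (m k s : ℕ) :
    ((m * s).choose k : ℤ) = ∑ n ∈ Finset.range (k + 1), T m n k * (s.choose n : ℤ) := by
  have key : ((X + 1 : Polynomial ℤ)) ^ (m * s)
      = ∑ n ∈ Finset.range (s + 1), (Pz m) ^ n * C ((s.choose n : ℤ)) := by
    rw [pow_mul]
    have h1 : ((X + 1 : Polynomial ℤ)) ^ m = Pz m + 1 := by simp [Pz]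
    rw [h1, add_pow]
    refine Finset.sum_congr rfl fun n _ => ?_
    simp
  have h2 := congrArg (fun p => p.coeff k) key
  simp only [coeff_X_add_one_pow, Int.cast_id, finset_sum_coeff, coeff_mul_C] at h2
  rw [h2]
  have hM : ∀ M : ℕ, s + 1 ≤ M → k + 1 ≤ M →
      (∑ n ∈ Finset.range (s+1), ((Pz m)^n).coeff k * (s.choose n : ℤ))
        = ∑ n ∈ Finset.range (k+1), T m n k * (s.choose n : ℤ) := by
    intro M hs hk
    rw [Finset.sum_subset (Finset.range_subset_range.mpr hs) (fun x _ hx => by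
      rw [Nat.choose_eq_zero_of_lt (by simpa using hx)]; simp)]
    rw [Finset.sum_subset (Finset.range_subset_range.mpr hk) (fun x _ hx => by
      rw [T_eq_zero (show k < x by simpa using hx)]; simp)]
    rfl
  exact hM (max (s+1) (k+1)) (le_max_left _ _) (le_max_right _ _)

/-! ### Coefficients of powers of `vSeries` -/

noncomputable def PZA (m : ℕ) : PowerSeries A :=
  (((Pz m).map (Int.castRingHom A) : Polynomial A) : PowerSeries A)

lemma coeff_PZA_pow (m n i : ℕ) :
    PowerSeries.coeff i ((PZA m) ^ n) = ((T m n i : ℤ) : A) := by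
  rw [PZA, ← Polynomial.coe_pow, ← Polynomial.map_pow, Polynomial.coeff_coe,
    Polynomial.coeff_map]
  simp [T]

lemma hB_ne_zero : hB ≠ 0 := by
  simp [hB, Polynomial.C_eq_zero, Polynomial.X_ne_zero]

lemma rescale_PZA (m : ℕ) :
    PowerSeries.rescale hB (PZA m) = PowerSeries.C hB * PowerSeries.X * vSeries m := by
  refine PowerSeries.ext fun k => ?_
  rw [PowerSeries.coeff_rescale]
  rw [mul_assoc, PowerSeries.coeff_C_mul]
  rw [show (PowerSeries.X : PowerSeries A) = PowerSeries.X ^ 1 by ring,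
    PowerSeries.coeff_X_pow_mul']
  have hc : PowerSeries.coeff k (PZA m)
      = ((m.choose k : ℤ) : A) - if k = 0 then 1 else 0 := by
    rw [PZA, Polynomial.coeff_coe, Polynomial.coeff_map, Pz]
    by_cases hk0 : k = 0 <;> simp [hk0, coeff_X_add_one_pow, Polynomial.coeff_one]
  rw [hc]
  rcases Nat.eq_zero_or_pos k with rfl | hk
  · simp
  · rw [if_pos (show 1 ≤ k from hk), if_neg hk.ne', sub_zero]
    obtain ⟨j, rfl⟩ := Nat.exists_eq_add_of_le hk
    simp only [Nat.add_sub_cancel_left] at *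
    rw [vSeries, PowerSeries.coeff_mk]
    by_cases hm : j + 1 ≤ m
    · rw [if_pos hm]
      push_cast
      ring
    · rw [if_neg hm, Nat.choose_eq_zero_of_lt (by omega)]
      simp

lemma coeff_vpow (m n j : ℕ) :
    PowerSeries.coeff j ((vSeries m) ^ n) = ((T m n (j + n) : ℤ) : A) * hB ^ j := by
  have key := congrArg (fun f => PowerSeries.coeff (j + n) f)
    (congrArg (fun f => f ^ n) (rescale_PZA m))
  have lhs : PowerSeries.coeff (j + n) (PowerSeries.rescale hB (PZA m) ^ n)
      = hB ^ n * (((T m n (j + n) : ℤ) : A) * hB ^ j) := by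
    rw [← map_pow, PowerSeries.coeff_rescale, coeff_PZA_pow]
    ring
  have rhs : PowerSeries.coeff (j + n) ((PowerSeries.C hB * PowerSeries.X * vSeries m) ^ n)
      = hB ^ n * PowerSeries.coeff j ((vSeries m) ^ n) := by
    have e : (PowerSeries.C hB * PowerSeries.X * vSeries m) ^ n
        = PowerSeries.C (hB ^ n) * (PowerSeries.X ^ n * (vSeries m) ^ n) := by
      rw [mul_pow, mul_pow, map_pow]; ring
    rw [e, PowerSeries.coeff_C_mul, PowerSeries.coeff_X_pow_mul]
  rw [lhs, rhs] at key
  exact (mul_left_cancel₀ (pow_ne_zero n hB_ne_zero) key).symm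

/-! ### Evaluation machinery -/

noncomputable def ev (a b : ℚ) : A →+* ℚ :=
  (Polynomial.evalRingHom a).comp (Polynomial.mapRingHom (Polynomial.evalRingHom b))

lemma ev_apply (a b : ℚ) (p : A) : ev a b p = (p.map (Polynomial.evalRingHom b)).eval a := rfl

lemma ev_hB (a b : ℚ) : ev a b hB = b := by
  simp [ev_apply, hB]
lemma ev_tB (a b : ℚ) : ev a b tB = a := by
  simp [ev_apply, tB]
lemma ev_CC (a b r : ℚ) : ev a b (Polynomial.C (Polynomial.C r)) = r := by
  simp [ev_apply]

lemma ev_bpoly (a b : ℚ) (n : ℕ) :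
    ev a b (bpoly n) = (n.factorial : ℚ)⁻¹ * ∏ i ∈ Finset.range n, (a - i * b) := by
  rw [bpoly, map_mul, ev_CC, map_prod]
  congr 1
  refine Finset.prod_congr rfl fun i _ => ?_
  rw [map_sub, map_mul, ev_tB, ev_hB, map_natCast]

lemma ev_mbpoly (a b : ℚ) (m n : ℕ) :
    ev a b (mbpoly m n) = (n.factorial : ℚ)⁻¹ * ∏ i ∈ Finset.range n, (m * a - i * b) := by
  rw [mbpoly, map_mul, ev_CC, map_prod]
  congr 1
  refine Finset.prod_congr rfl fun i _ => ?_
  rw [map_sub, map_mul, map_mul, ev_tB, ev_hB, map_natCast, map_natCast]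

lemma eq_of_ev {p q : A} (H : ∀ a b : ℚ, b ≠ 0 → ev a b p = ev a b q) : p = q := by
  refine Polynomial.ext fun i => ?_
  apply Polynomial.eq_of_infinite_eval_eq
  have hsub : {b : ℚ | b ≠ 0} ⊆
      {x | Polynomial.eval x (p.coeff i) = Polynomial.eval x (q.coeff i)} := by
    intro b hb
    have hmap : p.map (Polynomial.evalRingHom b) = q.map (Polynomial.evalRingHom b) :=
      Polynomial.funext fun a => H a b hb
    have := congrArg (fun r => r.coeff i) hmap
    simpa [Polynomial.coeff_map] using this
  refine Set.Infinite.mono hsub ?_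
  have h0 : ({0} : Set ℚ).Finite := Set.finite_singleton 0
  have := h0.infinite_compl
  convert this using 1
  ext x; simp

/-! ### The one-variable identity -/

lemma L1 (N k : ℕ) :
    ∏ i ∈ Finset.range k, ((N : ℚ) - i) = (k.factorial : ℚ) * (N.choose k) := by
  induction k with
  | zero => simp
  | succ k ih =>
    rw [Finset.prod_range_succ, ih]
    rcases lt_or_ge N k with h | h
    · rw [Nat.choose_eq_zero_of_lt h, Nat.choose_eq_zero_of_lt (h.trans (Nat.lt_succ_self k))]
      simp
    · have hq : (N.choose (k+1) : ℚ) * (k+1) = N.choose k * ((N - k : ℕ) : ℚ) := by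
        exact_mod_cast congrArg (Nat.cast : ℕ → ℚ) (Nat.choose_succ_right_eq N k)
      rw [Nat.cast_sub h] at hq
      rw [Nat.factorial_succ]
      push_cast
      linear_combination -(k.factorial : ℚ) * hq

lemma qId (m k : ℕ) (s : ℚ) :
    (k.factorial : ℚ)⁻¹ * ∏ i ∈ Finset.range k, ((m : ℚ) * s - i) =
    ∑ n ∈ Finset.range (k + 1), (T m n k : ℚ) *
      ((n.factorial : ℚ)⁻¹ * ∏ i ∈ Finset.range n, (s - i)) := by
  have hpoly : (C ((k.factorial : ℚ)⁻¹) *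
        ∏ i ∈ Finset.range k, ((m : ℚ[X]) * X - (i : ℚ[X]))) =
      ∑ n ∈ Finset.range (k + 1), C ((T m n k : ℚ)) *
        (C ((n.factorial : ℚ)⁻¹) * ∏ i ∈ Finset.range n, (X - (i : ℚ[X]))) := by
    apply Polynomial.eq_of_infinite_eval_eq
    apply Set.infinite_of_injective_forall_mem
      (f := fun s : ℕ => (s : ℚ)) Nat.cast_injective
    intro N
    simp only [Set.mem_setOf_eq, eval_mul, eval_C, eval_prod, eval_sub, eval_natCast,
      eval_X, eval_finset_sum]
    have hl : ∏ i ∈ Finset.range k, ((m : ℚ) * (N : ℚ) - (i : ℚ))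
        = (k.factorial : ℚ) * ((m * N).choose k) := by
      rw [← L1 (m * N) k]
      push_cast
      rfl
    rw [hl, inv_mul_cancel_left₀
      (show ((k.factorial : ℚ)) ≠ 0 by exact_mod_cast k.factorial_ne_zero)]
    simp only [L1]
    have hcan : ∀ n : ℕ,
        ((n.factorial : ℚ))⁻¹ * ((n.factorial : ℚ) * (N.choose n : ℚ)) = (N.choose n : ℚ) :=
      fun n => inv_mul_cancel_left₀ (by exact_mod_cast n.factorial_ne_zero) _
    simp only [hcan]
    exact_mod_cast natId m k N
  have := congrArg (eval s) hpoly
  simpa only [eval_mul, eval_C, eval_prod, eval_sub, eval_natCast, eval_X,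
    eval_finset_sum] using this

lemma numeric (m k : ℕ) (a b : ℚ) (hb : b ≠ 0) :
    (k.factorial : ℚ)⁻¹ * ∏ i ∈ Finset.range k, ((m : ℚ) * a - i * b) =
    ∑ n ∈ Finset.range (k + 1), (T m n k : ℚ) * b ^ (k - n) *
      ((n.factorial : ℚ)⁻¹ * ∏ i ∈ Finset.range n, (a - i * b)) := by
  have ha : a = (a / b) * b := (div_mul_cancel₀ a hb).symm
  set s := a / b with hs
  rw [ha]
  have hl : ∏ i ∈ Finset.range k, ((m : ℚ) * (s * b) - i * b)
      = (∏ i ∈ Finset.range k, ((m : ℚ) * s - i)) * b ^ k := by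
    rw [show ∏ i ∈ Finset.range k, ((m : ℚ) * (s * b) - i * b)
        = ∏ i ∈ Finset.range k, (((m : ℚ) * s - i) * b) from
      Finset.prod_congr rfl fun i _ => by ring]
    rw [Finset.prod_mul_distrib, Finset.prod_const, Finset.card_range]
  have hr : ∀ n : ℕ, ∏ i ∈ Finset.range n, ((s * b) - i * b)
      = (∏ i ∈ Finset.range n, (s - i)) * b ^ n := by
    intro n
    rw [show ∏ i ∈ Finset.range n, ((s * b) - i * b)
        = ∏ i ∈ Finset.range n, ((s - i) * b) from
      Finset.prod_congr rfl fun i _ => by ring]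
    rw [Finset.prod_mul_distrib, Finset.prod_const, Finset.card_range]
  rw [hl]
  have hterm : ∀ n ∈ Finset.range (k + 1),
      (T m n k : ℚ) * b ^ (k - n) *
        ((n.factorial : ℚ)⁻¹ * ∏ i ∈ Finset.range n, ((s * b) - i * b))
      = ((T m n k : ℚ) * ((n.factorial : ℚ)⁻¹ * ∏ i ∈ Finset.range n, (s - i))) * b ^ k := by
    intro n hn
    have hnk : n ≤ k := Nat.lt_succ_iff.mp (Finset.mem_range.mp hn)
    rw [hr n]
    have : b ^ (k - n) * b ^ n = b ^ k := by
      rw [← pow_add, Nat.sub_add_cancel hnk]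
    calc (T m n k : ℚ) * b ^ (k - n) *
          ((n.factorial : ℚ)⁻¹ * ((∏ i ∈ Finset.range n, (s - i)) * b ^ n))
        = ((T m n k : ℚ) * ((n.factorial : ℚ)⁻¹ * ∏ i ∈ Finset.range n, (s - i))) *
            (b ^ (k - n) * b ^ n) := by ring
      _ = _ := by rw [this]
  rw [Finset.sum_congr rfl hterm, ← Finset.sum_mul, ← qId m k s]
  ring

/-! ### The main polynomial identity -/

lemma star (m k : ℕ) :
    mbpoly m k = ∑ n ∈ Finset.range (k + 1),
      ((T m n k : ℤ) : A) * hB ^ (k - n) * bpoly n := by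
  apply eq_of_ev
  intro a b hb
  rw [map_sum, ev_mbpoly]
  have hterm : ∀ n ∈ Finset.range (k + 1),
      ev a b (((T m n k : ℤ) : A) * hB ^ (k - n) * bpoly n)
      = (T m n k : ℚ) * b ^ (k - n) *
          ((n.factorial : ℚ)⁻¹ * ∏ i ∈ Finset.range n, (a - i * b)) := by
    intro n _
    rw [map_mul, map_mul, map_pow, ev_hB, ev_bpoly, map_intCast]
  rw [Finset.sum_congr rfl hterm]
  exact numeric m k a b hb

end Stmt12Aux

open Stmt12Aux in
/-- each polynomial mt(mt−h)⋯(mt−(n−1)h)/n! lies in the ℤ[h]-span B₀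
of the b_k, and Σ_n (mt(mt−h)⋯(mt−(n−1)h)/n!) zⁿ = Σ_n b_n vⁿ zⁿ in B₀[[z]]
(stated coefficientwise in z). -/
theorem stmt12 (m : ℕ) (hm : 0 < m) :
    (∀ n : ℕ, ∃ c : ℕ → Polynomial ℤ,
      mbpoly m n = ∑ k ∈ Finset.range (n + 1), intH (c k) * bpoly k) ∧
    (∀ k : ℕ,
      mbpoly m k =
        ∑ n ∈ Finset.range (k + 1),
          bpoly n * PowerSeries.coeff (k - n)
            ((vSeries m) ^ n)) := by
  constructor
  · intro N
    refine ⟨fun n => Polynomial.C (T m n N) * Polynomial.X ^ (N - n), ?_⟩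
    rw [star m N]
    refine Finset.sum_congr rfl fun n hn => ?_
    have hIntH : intH (Polynomial.C (T m n N) * Polynomial.X ^ (N - n))
        = ((T m n N : ℤ) : A) * hB ^ (N - n) := by
      rw [intH, Polynomial.map_mul, Polynomial.map_C, Polynomial.map_pow, Polynomial.map_X,
        Polynomial.C_mul, Polynomial.C_pow]
      simp [hB]
    rw [hIntH]
  · intro k
    rw [star m k]
    refine Finset.sum_congr rfl fun n hn => ?_
    have hn' : n ≤ k := Nat.lt_succ_iff.mp (Finset.mem_range.mp hn)
    rw [coeff_vpow, Nat.sub_add_cancel hn']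
    ring
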